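/- Let π ∈ G_{r,n} and I ⊆ {1, …, n}, and let C(I, π) be the colored chain poset: the r-colored poset on {π(1), …, π(n), 0_1, …, 0_{r−1}} whose partial order is generated by 0_1 ≺ 0_2 ≺ ⋯ ≺ 0_{r−1} together with, for each i ∈ {1, …, n} with i ∉ I (and π(n+1) := 0_1), the relation π(i) ≺ π(i+1). Then for every σ ∈ G_{r,n}: σ belongs to ⋃_{w ∈ L(C(I,π))} CL(w) if and only if Des(σ⁻¹·π) ⊆ I, where σ⁻¹·π is computed in the group G_{r,n}. -/

import Mathlib

open scoped BigOperators

/-- Lexicographic (color-first) strict order on colored letters `(value, color)`. -/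
def letterLT (x y : ℕ × ℕ) : Prop :=
  x.2 < y.2 ∨ (x.2 = y.2 ∧ x.1 < y.1)

instance : DecidableRel letterLT := fun x y => by
  unfold letterLT; infer_instance

/-- Weak lexicographic order on parts `(color, value)` of `[0,j]_{(r)}`. -/
def partLE (a b : ℕ × ℕ) : Prop :=
  a.1 < b.1 ∨ (a.1 = b.1 ∧ a.2 ≤ b.2)

/-- Strict lexicographic order on parts `(color, value)` of `[0,j]_{(r)}`. -/
def partLT (a b : ℕ × ℕ) : Prop :=
  a.1 < b.1 ∨ (a.1 = b.1 ∧ a.2 < b.2)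

/-- `x^{(k)}`: shift the color of the colored letter `x = (value, color)` down by `k` mod `r`. -/
def shiftLetter (r k : ℕ) (x : ℕ × ℕ) : ℕ × ℕ :=
  (x.1, (x.2 + r - k % r) % r)

/-- An `r`-colored poset: a finite poset whose elements are the symbols
`0_1, …, 0_{r−1}` (encoded as `(0, m)`) together with finitely many colored letters
(pairs `(value, color)` with positive value and color `< r`) having pairwise distinct
values, such that `0_1 ≺ 0_2 ≺ ⋯ ≺ 0_{r−1}`. -/
structure ColoredPoset (r : ℕ) where
  elems : Finset (ℕ × ℕ)
  rel : ℕ × ℕ → ℕ × ℕ → Prop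
  zero_mem : ∀ m, 1 ≤ m → m < r → ((0 : ℕ), m) ∈ elems
  zero_only : ∀ x ∈ elems, x.1 = 0 → 1 ≤ x.2 ∧ x.2 < r
  col_lt : ∀ x ∈ elems, x.2 < r
  val_inj : ∀ x ∈ elems, ∀ y ∈ elems, 1 ≤ x.1 → x.1 = y.1 → x = y
  rel_refl : ∀ x ∈ elems, rel x x
  rel_antisymm : ∀ x ∈ elems, ∀ y ∈ elems, rel x y → rel y x → x = y
  rel_trans : ∀ x ∈ elems, ∀ y ∈ elems, ∀ z ∈ elems, rel x y → rel y z → rel x z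
  zero_chain : ∀ m m', 1 ≤ m → m ≤ m' → m' < r → rel (0, m) (0, m')

/-- A colored `P`-partition of the `r`-colored poset `P` with parts in
`[0,j]_{(r)} = {0,…,r−1} × {0,…,j}` (a part `(k, u)` lies in block `X_k`):
(i) `f(0_m) = (m, 0)`; (ii) `f` is weakly increasing along `≺`;
(iii) strict increase when both parts lie in block `k` and the `k`-shifted letters
decrease; (iv) only a letter of color `k` may take the maximal value `(k, j)`. -/
def IsCPP (r j : ℕ) (P : ColoredPoset r) (f : {x // x ∈ P.elems} → ℕ × ℕ) : Prop :=
  (∀ x, (f x).1 < r ∧ (f x).2 ≤ j) ∧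
  (∀ m (h1 : 1 ≤ m) (h2 : m < r), f ⟨(0, m), P.zero_mem m h1 h2⟩ = (m, 0)) ∧
  (∀ x y, P.rel x.1 y.1 → partLE (f x) (f y)) ∧
  (∀ x y, P.rel x.1 y.1 → (f x).1 = (f y).1 →
      letterLT (shiftLetter r (f x).1 y.1) (shiftLetter r (f x).1 x.1) →
      partLT (f x) (f y)) ∧
  (∀ x, (f x).2 = j → x.1.2 = (f x).1)

/-- The order polynomial `Ω_P(j)`: the number of colored `P`-partitions with parts
in `[0,j]_{(r)}`. -/
noncomputable def Omega (r j : ℕ) (P : ColoredPoset r) : ℕ :=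
  Nat.card {f : {x // x ∈ P.elems} → ℕ × ℕ // IsCPP r j P f}

/-- `w` is a linear extension of the `r`-colored poset `P`: a word listing each
element of `P` exactly once, with `x` before `y` whenever `x ≺ y`. -/
def IsLinExt {r : ℕ} (P : ColoredPoset r) (w : List (ℕ × ℕ)) : Prop :=
  w.Nodup ∧ (∀ x, x ∈ w ↔ x ∈ P.elems) ∧
  ∀ x ∈ P.elems, ∀ y ∈ P.elems, P.rel x y → x ≠ y → w.idxOf x < w.idxOf y

/-- The number of zero symbols appearing strictly before `x` in the word `w`. -/
def zerosBefore (w : List (ℕ × ℕ)) (x : ℕ × ℕ) : ℕ :=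
  ((w.take (w.idxOf x)).filter fun z => decide (z.1 = 0)).length

/-- The `i`-th block of the word `w`: its colored letters (positive value) preceded by
exactly `i` zero symbols. -/
def block (w : List (ℕ × ℕ)) (i : ℕ) : List (ℕ × ℕ) :=
  w.filter fun x => decide (1 ≤ x.1 ∧ zerosBefore w x = i)

/-- `π_i`: the `i`-th block of `w` with every letter shifted by `i`. -/
def blockWord (r : ℕ) (w : List (ℕ × ℕ)) (i : ℕ) : List (ℕ × ℕ) :=
  (block w i).map (shiftLetter r i)

/-- `u ∈ CL(w)`: `u` is a shuffle of the shifted blocks `π_0, …, π_{r−1}` of `w`,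
i.e. the letters of `u` are exactly those of `π_0, …, π_{r−1}` and each `π_i`
is a subsequence of `u`. -/
def IsColoredLinExt (r : ℕ) (w u : List (ℕ × ℕ)) : Prop :=
  (↑u : Multiset (ℕ × ℕ)) =
      ∑ i ∈ Finset.range r, (↑(blockWord r w i) : Multiset (ℕ × ℕ)) ∧
  ∀ i < r, (blockWord r w i).Sublist u

open Classical in
/-- The (finite) set `L(P)` of linear extensions of `P`. -/
noncomputable def LinExts {r : ℕ} (P : ColoredPoset r) : Finset (List (ℕ × ℕ)) :=
  P.elems.toList.permutations.toFinset.filter (IsLinExt P)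

open Classical in
/-- The (finite) set `CL(w)` of colored linear extensions of `w`. -/
noncomputable def ColLinExts (r : ℕ) (w : List (ℕ × ℕ)) : Finset (List (ℕ × ℕ)) :=
  (((List.range r).flatMap fun i => blockWord r w i).permutations.toFinset).filter
    (IsColoredLinExt r w)

/-- A colored `π`-partition of the word `u = u(0) ⋯ u(m−1)` with parts in `[0,j]_{(r)}`:
a colored `P`-partition of the chain `u(0) ≺ ⋯ ≺ u(m−1) ≺ 0_1 ≺ ⋯ ≺ 0_{r−1}`
(the forced values `f(0_m) = (m,0)` of the zeros are built into the conditions). -/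
def IsWordCPP (r j : ℕ) (u : List (ℕ × ℕ)) (f : Fin u.length → ℕ × ℕ) : Prop :=
  (∀ i, (f i).1 < r ∧ (f i).2 ≤ j) ∧
  (∀ i k : Fin u.length, i < k → partLE (f i) (f k)) ∧
  (∀ i k : Fin u.length, i < k → (f i).1 = (f k).1 →
      letterLT (shiftLetter r (f i).1 (u.get k)) (shiftLetter r (f i).1 (u.get i)) →
      partLT (f i) (f k)) ∧
  (∀ i : Fin u.length, ∀ m, 1 ≤ m → m < r → partLE (f i) (m, 0)) ∧
  (∀ i : Fin u.length, ∀ m, 1 ≤ m → m < r → (f i).1 = m →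
      letterLT (shiftLetter r m ((0 : ℕ), m)) (shiftLetter r m (u.get i)) →
      partLT (f i) (m, 0)) ∧
  (∀ i, (f i).2 = j → (u.get i).2 = (f i).1)

/-- `Ω_π(j)` for a word `π`: the number of colored `π`-partitions with parts in
`[0,j]_{(r)}`. -/
noncomputable def OmegaWord (r j : ℕ) (u : List (ℕ × ℕ)) : ℕ :=
  Nat.card {f : Fin u.length → ℕ × ℕ // IsWordCPP r j u f}

/-- The colored permutation group `G_{r,n}`. -/
@[ext] structure ColoredPerm (r n : ℕ) where
  perm : Equiv.Perm (Fin n)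
  col : Fin n → ZMod r

namespace ColoredPerm

variable {r n : ℕ}

instance : Mul (ColoredPerm r n) :=
  ⟨fun a b => ⟨a.perm * b.perm, fun i => a.col (b.perm i) + b.col i⟩⟩

instance : One (ColoredPerm r n) :=
  ⟨⟨1, fun _ => 0⟩⟩

instance : Inv (ColoredPerm r n) :=
  ⟨fun a => ⟨a.perm⁻¹, fun i => -a.col (a.perm⁻¹ i)⟩⟩

instance : Group (ColoredPerm r n) where
  mul_assoc a b c := by
    refine ColoredPerm.ext (mul_assoc _ _ _) ?_
    funext i
    show a.col (b.perm (c.perm i)) + b.col (c.perm i) + c.col i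
        = a.col ((b.perm * c.perm) i) + (b.col (c.perm i) + c.col i)
    rw [Equiv.Perm.mul_apply, add_assoc]
  one_mul a := by
    refine ColoredPerm.ext (one_mul _) ?_
    funext i
    show (0 : ZMod r) + a.col i = a.col i
    rw [zero_add]
  mul_one a := by
    refine ColoredPerm.ext (mul_one _) ?_
    funext i
    show a.col ((1 : Equiv.Perm (Fin n)) i) + 0 = a.col i
    simp
  inv_mul_cancel a := by
    refine ColoredPerm.ext (inv_mul_cancel _) ?_
    funext i
    show -a.col (a.perm⁻¹ (a.perm i)) + a.col i = 0
    simp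

/-- `ColoredPerm r n` is equivalent (as a type) to a product. -/
def toProd : ColoredPerm r n ≃ Equiv.Perm (Fin n) × (Fin n → ZMod r) where
  toFun a := (a.perm, a.col)
  invFun p := ⟨p.1, p.2⟩
  left_inv _ := rfl
  right_inv _ := rfl

instance [NeZero r] : Fintype (ColoredPerm r n) := Fintype.ofEquiv _ toProd.symm

instance : DecidableEq (ColoredPerm r n) := toProd.decidableEq

/-- The `i`-th letter of the one-line notation (0-indexed), as a pair (value, color);
for `i = n` this is the sentinel letter `0₁`. Values are in `{1, …, n}`. -/
def letterAt (a : ColoredPerm r n) (i : ℕ) : ℕ × ℕ :=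
  if h : i < n then ((a.perm ⟨i, h⟩ : ℕ) + 1, (a.col ⟨i, h⟩).val) else (0, 1)

/-- The descent set of a colored permutation (positions 0-indexed: position `i`
corresponds to the paper's `i+1 ∈ {1, …, n}`). -/
def Des (a : ColoredPerm r n) : Finset (Fin n) :=
  Finset.univ.filter fun i : Fin n => letterLT (letterAt a (i.1 + 1)) (letterAt a i.1)

/-- The descent number. -/
def des (a : ColoredPerm r n) : ℕ := (Des a).card

/-- The internal descent number `|Des(π) ∩ {1, …, n−1}|`. -/
def intdes (a : ColoredPerm r n) : ℕ :=
  ((Des a).filter fun i : Fin n => i.1 + 1 < n).card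

end ColoredPerm

/-- The `i`-th letter `π(i)` of a colored permutation, as a pair (value, color)
with value in `{1, …, n}`. -/
def letterOf {r n : ℕ} (a : ColoredPerm r n) (i : Fin n) : ℕ × ℕ :=
  ((a.perm i : ℕ) + 1, (a.col i).val)

/-- The one-line notation of a colored permutation, as a word of colored letters. -/
def word {r n : ℕ} (a : ColoredPerm r n) : List (ℕ × ℕ) :=
  List.ofFn (letterOf a)

/-- `π(i+1)`, where the letter after the last one is the sentinel `0_1`. -/
def nextLetter {r n : ℕ} (a : ColoredPerm r n) (p : Fin n) : ℕ × ℕ :=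
  if h : p.1 + 1 < n then letterOf a ⟨p.1 + 1, h⟩ else (0, 1)

/-- The underlying element set of the posets `Z(I,π)` and `C(I,π)`: the letters of
`π` together with the zero symbols `0_1, …, 0_{r−1}`. -/
def permElems (r n : ℕ) (a : ColoredPerm r n) : Finset (ℕ × ℕ) :=
  (Finset.univ.image (letterOf a)) ∪ ((Finset.Ico 1 r).image fun m => ((0 : ℕ), m))

/-- The generating relations of the colored zig-zag poset `Z(I, π)`:
the chain `0_1 ≺ ⋯ ≺ 0_{r−1}` together with `π(i) ≺ π(i+1)` for `i ∉ I` and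
`π(i+1) ≺ π(i)` for `i ∈ I` (with `π(n+1) := 0_1`; positions 0-indexed). -/
def zigzagBase (r n : ℕ) (a : ColoredPerm r n) (I : Finset (Fin n))
    (x y : ℕ × ℕ) : Prop :=
  (∃ m m', 1 ≤ m ∧ m ≤ m' ∧ m' < r ∧ x = ((0 : ℕ), m) ∧ y = ((0 : ℕ), m')) ∨
  (∃ p : Fin n, p ∉ I ∧ x = letterOf a p ∧ y = nextLetter a p) ∨
  (∃ p : Fin n, p ∈ I ∧ x = nextLetter a p ∧ y = letterOf a p)

/-- The generating relations of the colored chain poset `C(I, π)`: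
the chain `0_1 ≺ ⋯ ≺ 0_{r−1}` together with `π(i) ≺ π(i+1)` for `i ∉ I`
(with `π(n+1) := 0_1`; positions 0-indexed). -/
def chainBase (r n : ℕ) (a : ColoredPerm r n) (I : Finset (Fin n))
    (x y : ℕ × ℕ) : Prop :=
  (∃ m m', 1 ≤ m ∧ m ≤ m' ∧ m' < r ∧ x = ((0 : ℕ), m) ∧ y = ((0 : ℕ), m')) ∨
  (∃ p : Fin n, p ∉ I ∧ x = letterOf a p ∧ y = nextLetter a p)


/-! ### Auxiliary machinery -/

section Aux

open List

variable {r n : ℕ}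

lemma partLE_refl (a : ℕ × ℕ) : partLE a a := Or.inr ⟨rfl, le_refl _⟩

lemma partLE_trans {a b c : ℕ × ℕ} (h1 : partLE a b) (h2 : partLE b c) : partLE a c := by
  unfold partLE at *; omega

lemma not_partLT_of_partLE {a b : ℕ × ℕ} (h : partLE a b) : ¬ partLT b a := by
  unfold partLE partLT at *; omega

lemma partLT_irrefl (a : ℕ × ℕ) : ¬ partLT a a := by unfold partLT; omega

lemma idxP (x : ℕ × ℕ) (l : List (ℕ × ℕ)) :
    List.idxOf x l = @List.idxOf _ instBEqOfDecidableEq x l :=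
  congrArg (fun i : BEq (ℕ × ℕ) => @List.idxOf _ i x l)
    (@lawful_beq_subsingleton (ℕ × ℕ) _ _ Prod.instLawfulBEq
      (@instLawfulBEq (ℕ × ℕ) _))

/-- Shift the color of a letter up by `k` mod `r`. -/
def shiftUp (r k : ℕ) (x : ℕ × ℕ) : ℕ × ℕ := (x.1, (x.2 + k) % r)

lemma shiftLetter_shiftUp {k : ℕ} (hk : k < r) {x : ℕ × ℕ} (hx : x.2 < r) :
    shiftLetter r k (shiftUp r k x) = x := by
  unfold shiftLetter shiftUp
  have h1 : k % r = k := Nat.mod_eq_of_lt hk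
  have h2 : (x.2 + k) % r + r - k = (x.2 + k) % r + (r - k) := by omega
  simp only [h1]
  rw [h2, Nat.mod_add_mod]
  have h3 : x.2 + k + (r - k) = x.2 + r := by omega
  rw [h3, Nat.add_mod_right, Nat.mod_eq_of_lt hx]

lemma tau_perm (a σ : ColoredPerm r n) (i : Fin n) :
    (σ⁻¹ * a).perm i = σ.perm⁻¹ (a.perm i) := rfl

lemma tau_col (a σ : ColoredPerm r n) (i : Fin n) :
    (σ⁻¹ * a).col i = a.col i - σ.col (σ.perm⁻¹ (a.perm i)) := by
  show -σ.col (σ.perm⁻¹ (a.perm i)) + a.col i = _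
  rw [neg_add_eq_sub, sub_eq_sub_iff_sub_eq_sub]; simp

/-- Index in `b` of the letter of value `v`. -/
def aidx (b : ColoredPerm r n) (hn : 0 < n) (v : ℕ) : Fin n :=
  b.perm⁻¹ ⟨(v - 1) % n, Nat.mod_lt _ hn⟩

lemma aidx_letter (b b' : ColoredPerm r n) (hn : 0 < n) (i : Fin n) :
    aidx b hn ((b'.perm i : ℕ) + 1) = b.perm⁻¹ (b'.perm i) := by
  unfold aidx
  congr 1
  ext
  simp [Nat.mod_eq_of_lt (b'.perm i).isLt]

/-- The block index of a letter (determined by its value). -/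
def blkv (a σ : ColoredPerm r n) (hn : 0 < n) (x : ℕ × ℕ) : ℕ :=
  ((σ⁻¹ * a).col (aidx a hn x.1)).val

/-- The position (in `σ`) of a letter (determined by its value). -/
def posv (σ : ColoredPerm r n) (hn : 0 < n) (x : ℕ × ℕ) : ℕ :=
  (aidx σ hn x.1 : Fin n)

/-- The sorting key. -/
def key (a σ : ColoredPerm r n) (hn : 0 < n) (x : ℕ × ℕ) : ℕ × ℕ :=
  if x.1 = 0 then (x.2, 0) else (blkv a σ hn x, posv σ hn x + 1)

lemma blkv_letter_a (a σ : ColoredPerm r n) (hn : 0 < n) (i : Fin n) :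
    blkv a σ hn (letterOf a i) = ((σ⁻¹ * a).col i).val := by
  unfold blkv letterOf; rw [show ((a.perm i : ℕ) + 1, (a.col i).val).1 = (a.perm i : ℕ) + 1 from rfl,
    aidx_letter]; simp

lemma blkv_letter_s (a σ : ColoredPerm r n) (hn : 0 < n) (j : Fin n) :
    blkv a σ hn (letterOf σ j) = ((σ⁻¹ * a).col (a.perm⁻¹ (σ.perm j))).val := by
  unfold blkv letterOf
  rw [show ((σ.perm j : ℕ) + 1, (σ.col j).val).1 = (σ.perm j : ℕ) + 1 from rfl, aidx_letter]

lemma posv_letter_a (a σ : ColoredPerm r n) (hn : 0 < n) (i : Fin n) :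
    posv σ hn (letterOf a i) = ((σ⁻¹ * a).perm i : ℕ) := by
  unfold posv letterOf
  rw [show ((a.perm i : ℕ) + 1, (a.col i).val).1 = (a.perm i : ℕ) + 1 from rfl, aidx_letter]
  rfl

lemma posv_letter_s (σ : ColoredPerm r n) (hn : 0 < n) (j : Fin n) :
    posv σ hn (letterOf σ j) = (j : ℕ) := by
  unfold posv letterOf
  rw [show ((σ.perm j : ℕ) + 1, (σ.col j).val).1 = (σ.perm j : ℕ) + 1 from rfl, aidx_letter]
  simp

lemma shift_id [NeZero r] (a σ : ColoredPerm r n) (hn : 0 < n) (j : Fin n) :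
    shiftUp r (((σ⁻¹ * a).col (a.perm⁻¹ (σ.perm j))).val) (letterOf σ j)
      = letterOf a (a.perm⁻¹ (σ.perm j)) := by
  set i := a.perm⁻¹ (σ.perm j) with hi
  have hpi : a.perm i = σ.perm j := by rw [hi]; simp
  unfold shiftUp letterOf
  refine Prod.ext ?_ ?_
  · simp [hpi]
  · show ((σ.col j).val + ((σ⁻¹ * a).col i).val) % r = (a.col i).val
    rw [← ZMod.val_add]
    congr 1
    rw [tau_col, hpi]
    simp

lemma shift_id' [NeZero r] (a σ : ColoredPerm r n) (hn : 0 < n) (i : Fin n) :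
    shiftUp r (((σ⁻¹ * a).col i).val) (letterOf σ ((σ⁻¹ * a).perm i)) = letterOf a i := by
  have h := shift_id a σ hn ((σ⁻¹ * a).perm i)
  rw [tau_perm] at h
  simpa [tau_perm] using h

lemma key_letter_a (a σ : ColoredPerm r n) (hn : 0 < n) (i : Fin n) :
    key a σ hn (letterOf a i)
      = (((σ⁻¹ * a).col i).val, ((σ⁻¹ * a).perm i : ℕ) + 1) := by
  unfold key
  rw [if_neg (by simp [letterOf])]
  rw [blkv_letter_a, posv_letter_a]

lemma key_zero (a σ : ColoredPerm r n) (hn : 0 < n) (m : ℕ) :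
    key a σ hn ((0 : ℕ), m) = (m, 0) := by unfold key; simp

lemma letterAt_coe (τ : ColoredPerm r n) (p : Fin n) :
    ColoredPerm.letterAt τ (p : ℕ) = ((τ.perm p : ℕ) + 1, (τ.col p).val) := by
  unfold ColoredPerm.letterAt
  rw [dif_pos p.isLt]

lemma mem_Des_iff (τ : ColoredPerm r n) (p : Fin n) :
    p ∈ ColoredPerm.Des τ ↔
      letterLT (ColoredPerm.letterAt τ (p.1 + 1)) (ColoredPerm.letterAt τ p.1) := by
  unfold ColoredPerm.Des
  simp

/-- Key is weakly monotone along a `chainBase` step, given the descent condition. -/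
lemma chainBase_key [NeZero r] (a σ : ColoredPerm r n) (hn : 0 < n) (I : Finset (Fin n))
    (hDes : ColoredPerm.Des (σ⁻¹ * a) ⊆ I) {x y : ℕ × ℕ}
    (h : chainBase r n a I x y) : partLE (key a σ hn x) (key a σ hn y) := by
  rcases h with ⟨m, m', h1, h2, h3, rfl, rfl⟩ | ⟨p, hp, rfl, rfl⟩
  · rw [key_zero, key_zero]
    exact partLE_trans (Or.inr ⟨rfl, le_refl _⟩) (by unfold partLE; omega)
  · have hnd : p ∉ ColoredPerm.Des (σ⁻¹ * a) := fun hc => hp (hDes hc)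
    rw [mem_Des_iff] at hnd
    rw [letterAt_coe] at hnd
    rw [key_letter_a]
    unfold nextLetter
    by_cases hp1 : p.1 + 1 < n
    · rw [dif_pos hp1, key_letter_a]
      have hlt : ColoredPerm.letterAt (σ⁻¹ * a) (p.1 + 1)
          = (((σ⁻¹ * a).perm ⟨p.1 + 1, hp1⟩ : ℕ) + 1, ((σ⁻¹ * a).col ⟨p.1 + 1, hp1⟩).val) := by
        have := letterAt_coe (σ⁻¹ * a) ⟨p.1 + 1, hp1⟩
        simpa using this
      rw [hlt] at hnd
      unfold letterLT at hnd
      have hne : ((σ⁻¹ * a).perm ⟨p.1 + 1, hp1⟩ : ℕ) ≠ ((σ⁻¹ * a).perm p : ℕ) := by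
        intro hc
        have : (⟨p.1 + 1, hp1⟩ : Fin n) = p := (σ⁻¹ * a).perm.injective (Fin.ext hc)
        have := Fin.mk.injEq (p.1+1) hp1 p.1 p.isLt ▸ this
        omega
      unfold partLE
      simp only [not_or, not_and, not_lt] at hnd
      omega
    · rw [dif_neg hp1, key_zero]
      have hlast : ColoredPerm.letterAt (σ⁻¹ * a) (p.1 + 1) = ((0 : ℕ), 1) := by
        unfold ColoredPerm.letterAt
        rw [dif_neg hp1]
      rw [hlast] at hnd
      unfold letterLT at hnd
      simp only [not_or, not_and, not_lt] at hnd
      unfold partLE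
      omega

section Lists
variable {α : Type*}

lemma pairwise_range_flatMap (F : ℕ → List α) (R : α → α → Prop) (r : ℕ)
    (h1 : ∀ k < r, (F k).Pairwise R)
    (h2 : ∀ k l, k < l → l < r → ∀ x ∈ F k, ∀ y ∈ F l, R x y) :
    ((List.range r).flatMap F).Pairwise R := by
  induction r with
  | zero => simp
  | succ r ih =>
    rw [List.range_succ, List.flatMap_append]
    rw [List.pairwise_append]
    refine ⟨ih (fun k hk => h1 k (by omega)) (fun k l hkl hl => h2 k l hkl (by omega)), ?_, ?_⟩
    · simpa using h1 r (by omega)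
    · intro x hx y hy
      rw [List.mem_flatMap] at hx
      obtain ⟨k, hk, hxk⟩ := hx
      rw [List.mem_range] at hk
      simp only [List.flatMap_cons, List.flatMap_nil, List.append_nil] at hy
      exact h2 k r hk (by omega) x hxk y hy

lemma pairwise_get_of_lt [DecidableEq α] {R : α → α → Prop} {l : List α}
    (hp : l.Pairwise R) {x y : α} (hx : x ∈ l) (hy : y ∈ l)
    (h : l.idxOf x < l.idxOf y) : R x y := by
  rw [List.pairwise_iff_get] at hp
  have hxl := List.idxOf_lt_length_iff.2 hx
  have hyl := List.idxOf_lt_length_iff.2 hy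
  have := hp ⟨l.idxOf x, hxl⟩ ⟨l.idxOf y, hyl⟩ h
  rwa [List.idxOf_get, List.idxOf_get] at this

lemma indexOf_lt_of_pairwise' [DecidableEq α] {R : α → α → Prop} {l : List α}
    (hp : l.Pairwise R) {x y : α} (hx : x ∈ l) (hy : y ∈ l) (hxy : x ≠ y)
    (hR : R y x → False) : l.idxOf x < l.idxOf y := by
  rcases lt_trichotomy (l.idxOf x) (l.idxOf y) with h | h | h
  · exact h
  · exfalso
    apply hxy
    have hxl := List.idxOf_lt_length_iff.2 hx
    have hyl := List.idxOf_lt_length_iff.2 hy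
    have hx2 : l.get ⟨l.idxOf x, hxl⟩ = x := List.idxOf_get _
    have hy2 : l.get ⟨l.idxOf y, hyl⟩ = y := List.idxOf_get _
    rw [← hx2, ← hy2]
    congr 1
    exact Fin.ext h
  · exact absurd (pairwise_get_of_lt hp hy hx h) hR

lemma mem_take_indexOf [DecidableEq α] {l : List α} {t : ℕ} {x : α}
    (h : x ∈ l.take t) : l.idxOf x < t := by
  induction l generalizing t with
  | nil => simp at h
  | cons a l ih =>
    cases t with
    | zero => simp at h
    | succ t =>
      rw [List.take_succ_cons] at h
      rcases List.mem_cons.1 h with rfl | h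
      · rw [List.idxOf_cons_self]; omega
      · by_cases hxa : x = a
        · subst hxa; rw [List.idxOf_cons_self]; omega
        · rw [List.idxOf_cons_ne _ (by exact fun hc => hxa hc.symm)]
          have := ih h
          omega

lemma take_sublist_take {l : List α} {m t : ℕ} (h : m ≤ t) : l.take m <+ l.take t := by
  have : l.take m = (l.take t).take m := by rw [List.take_take, Nat.min_eq_left h]
  rw [this]
  exact List.take_sublist _ _

/-- Index monotonicity for sublists of a nodup list. -/
lemma sublist_indexOf_lt [DecidableEq α] {l L : List α} (hs : l <+ L) (hN : L.Nodup)
    {x y : α} (hx : x ∈ l) (hy : y ∈ l) (h : l.idxOf x < l.idxOf y) :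
    L.idxOf x < L.idxOf y := by
  obtain ⟨f, hf⟩ := List.sublist_iff_exists_fin_orderEmbedding_get_eq.1 hs
  have hxl := List.idxOf_lt_length_iff.2 hx
  have hyl := List.idxOf_lt_length_iff.2 hy
  have key : ∀ (z : α) (hz : z ∈ l),
      L.idxOf z = (f ⟨l.idxOf z, List.idxOf_lt_length_iff.2 hz⟩ : ℕ) := by
    intro z hz
    have h1 : L.get (f ⟨l.idxOf z, List.idxOf_lt_length_iff.2 hz⟩) = z := by
      rw [← hf]; exact List.idxOf_get _
    have h2 : L.get ⟨L.idxOf z, List.idxOf_lt_length_iff.2 (hs.mem hz)⟩ = z :=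
      List.idxOf_get _
    have := (List.Nodup.get_inj_iff hN).1 (h2.trans h1.symm)
    exact congrArg Fin.val this
  rw [key x hx, key y hy]
  exact f.lt_iff_lt.2 (by exact Fin.mk_lt_mk.2 h)

lemma pairwise_cases {R : α → α → Prop} {l : List α} (hp : l.Pairwise R)
    {x y : α} (hx : x ∈ l) (hy : y ∈ l) : x = y ∨ R x y ∨ R y x := by
  induction l with
  | nil => simp at hx
  | cons a t ih =>
    rw [List.pairwise_cons] at hp
    rcases List.mem_cons.1 hx with hxa | hx'
    · rcases List.mem_cons.1 hy with hya | hy'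
      · exact Or.inl (hxa.trans hya.symm)
      · exact Or.inr (Or.inl (hxa ▸ hp.1 _ hy'))
    · rcases List.mem_cons.1 hy with hya | hy'
      · exact Or.inr (Or.inr (hya ▸ hp.1 _ hx'))
      · exact ih hp.2 hx' hy'

lemma filter_flatMap' (l : List α) {β : Type*} (f : α → List β) (p : β → Bool) :
    (l.flatMap f).filter p = l.flatMap fun a => (f a).filter p := by
  induction l with
  | nil => simp
  | cons a t ih => simp [List.flatMap_cons, List.filter_append, ih]

lemma flatMap_eq_single {β : Type*} (f : ℕ → List β) (r k : ℕ) (hk : k < r)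
    (h : ∀ l < r, l ≠ k → f l = []) : (List.range r).flatMap f = f k := by
  induction r with
  | zero => omega
  | succ r ih =>
    rw [List.range_succ, List.flatMap_append]
    simp only [List.flatMap_cons, List.flatMap_nil, List.append_nil]
    by_cases hkr : k = r
    · subst hkr
      have : (List.range k).flatMap f = [] := by
        rw [List.flatMap_eq_nil_iff]
        intro l hl
        exact h l (by simp at hl; omega) (by simp at hl; omega)
      rw [this, List.nil_append]
    · rw [h r (by omega) (fun hc => hkr hc.symm), List.append_nil]
      exact ih (by omega) (fun l hl hlk => h l (by omega) hlk)

lemma sum_filter_multiset {β : Type*} [DecidableEq β] (g : β → ℕ) (r : ℕ) (l : List β)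
    (h : ∀ x ∈ l, g x < r) :
    ∑ k ∈ Finset.range r, ((l.filter fun x => decide (g x = k) : List β) : Multiset β)
      = (l : Multiset β) := by
  induction l with
  | nil => simp
  | cons x t ih =>
    have step : ∀ k, ((List.filter (fun x => decide (g x = k)) (x :: t) : List β) : Multiset β)
        = (if g x = k then ({x} : Multiset β) else 0)
          + ((t.filter fun y => decide (g y = k) : List β) : Multiset β) := by
      intro k
      by_cases hk : g x = k <;> simp [List.filter_cons, hk]
    rw [Finset.sum_congr rfl (fun k _ => step k), Finset.sum_add_distrib]
    rw [ih (fun y hy => h y (List.mem_cons_of_mem _ hy))]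
    rw [Finset.sum_ite_eq (Finset.range r) (g x) (fun _ => ({x} : Multiset β))]
    rw [if_pos (Finset.mem_range.2 (h x List.mem_cons_self))]
    simp

end Lists

section Constr

variable {r n : ℕ}

/-- The letters of `σ` lying in block `k`. -/
def Lb (a σ : ColoredPerm r n) (hn : 0 < n) (k : ℕ) : List (ℕ × ℕ) :=
  (word σ).filter fun x => decide (blkv a σ hn x = k)

/-- The `k`-th block: letters of `σ` in block `k`, unshifted. -/
def Bb (a σ : ColoredPerm r n) (hn : 0 < n) (k : ℕ) : List (ℕ × ℕ) :=
  (Lb a σ hn k).map (shiftUp r k)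

/-- The `k`-th chunk of the constructed linear extension. -/
def Fc (a σ : ColoredPerm r n) (hn : 0 < n) (k : ℕ) : List (ℕ × ℕ) :=
  (if k = 0 then [] else [((0 : ℕ), k)]) ++ Bb a σ hn k

/-- The constructed linear extension. -/
def ww (r : ℕ) (a σ : ColoredPerm r n) (hn : 0 < n) : List (ℕ × ℕ) :=
  (List.range r).flatMap (Fc a σ hn)

lemma mem_word {σ : ColoredPerm r n} {x : ℕ × ℕ} :
    x ∈ word σ ↔ ∃ j : Fin n, letterOf σ j = x := by
  unfold word
  rw [List.mem_ofFn]

lemma mem_Bb {a σ : ColoredPerm r n} {hn : 0 < n} {k : ℕ} {x : ℕ × ℕ} :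
    x ∈ Bb a σ hn k ↔ ∃ j : Fin n,
      blkv a σ hn (letterOf σ j) = k ∧ x = shiftUp r k (letterOf σ j) := by
  unfold Bb Lb
  rw [List.mem_map]
  constructor
  · rintro ⟨y, hy, rfl⟩
    rw [List.mem_filter] at hy
    obtain ⟨j, rfl⟩ := mem_word.1 hy.1
    exact ⟨j, by simpa using hy.2, rfl⟩
  · rintro ⟨j, hj, rfl⟩
    exact ⟨letterOf σ j, List.mem_filter.2 ⟨mem_word.2 ⟨j, rfl⟩, by simpa using hj⟩, rfl⟩

lemma blkv_shiftUp (a σ : ColoredPerm r n) (hn : 0 < n) (k : ℕ) (x : ℕ × ℕ) :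
    blkv a σ hn (shiftUp r k x) = blkv a σ hn x := rfl

lemma posv_shiftUp (σ : ColoredPerm r n) (hn : 0 < n) (k : ℕ) (x : ℕ × ℕ) :
    posv σ hn (shiftUp r k x) = posv σ hn x := rfl

lemma fst_shiftUp (k : ℕ) (x : ℕ × ℕ) : (shiftUp r k x).1 = x.1 := rfl

lemma mem_Bb_fst {a σ : ColoredPerm r n} {hn : 0 < n} {k : ℕ} {x : ℕ × ℕ}
    (hx : x ∈ Bb a σ hn k) : x.1 ≠ 0 := by
  obtain ⟨j, _, rfl⟩ := mem_Bb.1 hx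
  simp [shiftUp, letterOf]

lemma key_Bb {a σ : ColoredPerm r n} {hn : 0 < n} {k : ℕ} {x : ℕ × ℕ}
    (hx : x ∈ Bb a σ hn k) : key a σ hn x = (k, posv σ hn x + 1) := by
  obtain ⟨j, hj, rfl⟩ := mem_Bb.1 hx
  unfold key
  rw [if_neg (by simpa using mem_Bb_fst hx), blkv_shiftUp, hj]

lemma key_Fc_fst {a σ : ColoredPerm r n} {hn : 0 < n} {k : ℕ} {x : ℕ × ℕ}
    (hx : x ∈ Fc a σ hn k) : (key a σ hn x).1 = k := by
  unfold Fc at hx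
  rcases List.mem_append.1 hx with h | h
  · by_cases hk : k = 0
    · rw [hk] at h; simp at h
    · rw [if_neg hk] at h
      rcases List.mem_singleton.1 h with rfl
      rw [key_zero]
  · rw [key_Bb h]

lemma pairwise_word (σ : ColoredPerm r n) (hn : 0 < n) :
    (word σ).Pairwise (fun x y => posv σ hn x < posv σ hn y) := by
  unfold word
  rw [List.pairwise_ofFn]
  intro i j hij
  rw [posv_letter_s, posv_letter_s]
  exact hij

lemma pairwise_Bb (a σ : ColoredPerm r n) (hn : 0 < n) (k : ℕ) :
    (Bb a σ hn k).Pairwise (fun x y => posv σ hn x < posv σ hn y) := by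
  unfold Bb
  rw [List.pairwise_map]
  exact (pairwise_word σ hn).filter _

lemma pairwise_Fc (a σ : ColoredPerm r n) (hn : 0 < n) (k : ℕ) :
    (Fc a σ hn k).Pairwise
      (fun x y => partLT (key a σ hn x) (key a σ hn y)) := by
  unfold Fc
  rw [List.pairwise_append]
  refine ⟨?_, ?_, ?_⟩
  · by_cases hk : k = 0 <;> simp [hk]
  · exact (pairwise_Bb a σ hn k).imp_of_mem
      (fun hx hy h => by rw [key_Bb hx, key_Bb hy]; exact Or.inr ⟨rfl, by omega⟩)
  · intro x hx y hy
    by_cases hk : k = 0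
    · rw [hk] at hx; simp at hx
    · rw [if_neg hk] at hx
      rcases List.mem_singleton.1 hx with rfl
      rw [key_zero, key_Bb hy]
      exact Or.inr ⟨rfl, by omega⟩

lemma pairwise_ww (a σ : ColoredPerm r n) (hn : 0 < n) :
    (ww r a σ hn).Pairwise
      (fun x y => partLT (key a σ hn x) (key a σ hn y)) := by
  unfold ww
  refine pairwise_range_flatMap _ _ _ (fun k _ => pairwise_Fc a σ hn k) ?_
  intro k l hkl _ x hx y hy
  exact Or.inl (by rw [key_Fc_fst hx, key_Fc_fst hy]; exact hkl)

lemma nodup_ww (a σ : ColoredPerm r n) (hn : 0 < n) : (ww r a σ hn).Nodup := by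
  refine (pairwise_ww a σ hn).imp ?_
  intro x y h heq
  rw [heq] at h
  exact partLT_irrefl _ h

lemma mem_permElems {a : ColoredPerm r n} {x : ℕ × ℕ} :
    x ∈ permElems r n a ↔
      (∃ i : Fin n, letterOf a i = x) ∨ (∃ m, 1 ≤ m ∧ m < r ∧ x = ((0 : ℕ), m)) := by
  unfold permElems
  rw [Finset.mem_union, Finset.mem_image, Finset.mem_image]
  constructor
  · rintro (⟨i, _, h⟩ | ⟨m, hm, h⟩)
    · exact Or.inl ⟨i, h⟩
    · rw [Finset.mem_Ico] at hm
      exact Or.inr ⟨m, hm.1, hm.2, h.symm⟩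
  · rintro (⟨i, h⟩ | ⟨m, h1, h2, h3⟩)
    · exact Or.inl ⟨i, Finset.mem_univ _, h⟩
    · exact Or.inr ⟨m, Finset.mem_Ico.2 ⟨h1, h2⟩, h3.symm⟩

lemma mem_ww [NeZero r] {a σ : ColoredPerm r n} {hn : 0 < n} {x : ℕ × ℕ} :
    x ∈ ww r a σ hn ↔ x ∈ permElems r n a := by
  rw [mem_permElems]
  unfold ww
  rw [List.mem_flatMap]
  constructor
  · rintro ⟨k, hk, hx⟩
    rw [List.mem_range] at hk
    unfold Fc at hx
    rcases List.mem_append.1 hx with h | h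
    · by_cases h0 : k = 0
      · rw [h0] at h; simp at h
      · rw [if_neg h0] at h
        rcases List.mem_singleton.1 h with rfl
        exact Or.inr ⟨k, by omega, hk, rfl⟩
    · obtain ⟨j, hj, rfl⟩ := mem_Bb.1 h
      left
      refine ⟨a.perm⁻¹ (σ.perm j), ?_⟩
      rw [← hj, blkv_letter_s]
      exact (shift_id a σ hn j).symm ▸ (shift_id a σ hn j)
  · rintro (⟨i, rfl⟩ | ⟨m, h1, h2, rfl⟩)
    · refine ⟨((σ⁻¹ * a).col i).val, List.mem_range.2 (ZMod.val_lt _), ?_⟩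
      unfold Fc
      refine List.mem_append_right _ (mem_Bb.2 ⟨(σ⁻¹ * a).perm i, ?_, ?_⟩)
      · rw [blkv_letter_s, tau_perm]
        simp
      · rw [← shift_id' a σ hn i]
    · exact ⟨m, List.mem_range.2 h2, List.mem_append_left _ (by rw [if_neg (by omega)]; simp)⟩

end Constr

section Blocks

variable {r n : ℕ}

lemma zf_Bb (a σ : ColoredPerm r n) (hn : 0 < n) (k : ℕ) :
    (Bb a σ hn k).filter (fun x => decide (x.1 = 0)) = [] := by
  rw [List.filter_eq_nil_iff]
  intro x hx
  simpa using mem_Bb_fst hx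

lemma zlen_pre (a σ : ColoredPerm r n) (hn : 0 < n) (k : ℕ) :
    (((List.range k).flatMap (Fc a σ hn)).filter fun x => decide (x.1 = 0)).length
      = k - 1 := by
  induction k with
  | zero => simp
  | succ k ih =>
    rw [List.range_succ, List.flatMap_append]
    simp only [List.flatMap_cons, List.flatMap_nil, List.append_nil]
    rw [List.filter_append, List.length_append, ih]
    unfold Fc
    rw [List.filter_append, zf_Bb, List.append_nil]
    by_cases hk : k = 0
    · subst hk; simp
    · rw [if_neg hk]
      simp only [List.filter_cons, List.filter_nil]
      rw [if_pos (by simp)]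
      simp only [List.length_cons, List.length_nil]
      omega

lemma ww_decomp (a σ : ColoredPerm r n) (hn : 0 < n) {k : ℕ} (hk : k < r) :
    ∃ rest, ww r a σ hn
      = ((List.range k).flatMap (Fc a σ hn) ++ Fc a σ hn k) ++ rest := by
  refine ⟨((List.range (r - (k + 1))).map ((k + 1) + ·)).flatMap (Fc a σ hn), ?_⟩
  unfold ww
  have hr : List.range r
      = (List.range k ++ [k]) ++ (List.range (r - (k + 1))).map ((k + 1) + ·) := by
    rw [← List.range_succ, ← List.range_add]
    congr 1
    omega
  rw [hr, List.flatMap_append, List.flatMap_append]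
  simp only [List.flatMap_cons, List.flatMap_nil, List.append_nil]

lemma zb_Bb (a σ : ColoredPerm r n) (hn : 0 < n) {k : ℕ} (hk : k < r) {x : ℕ × ℕ}
    (hx : x ∈ Bb a σ hn k) : zerosBefore (ww r a σ hn) x = k := by
  obtain ⟨rest, hW⟩ := ww_decomp a σ hn hk
  set P := (List.range k).flatMap (Fc a σ hn) with hP
  set sep := (if k = 0 then ([] : List (ℕ × ℕ)) else [((0 : ℕ), k)]) with hsep
  have hFc : Fc a σ hn k = sep ++ Bb a σ hn k := rfl
  have hxF : x ∈ Fc a σ hn k := by rw [hFc]; exact List.mem_append_right _ hx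
  have hnd := nodup_ww a σ hn
  rw [hW] at hnd
  have hdisj := (List.nodup_append.1 (List.nodup_append.1 hnd).1).2.2
  have hxP : x ∉ P := fun h => hdisj x h x hxF rfl
  have hxSep : x ∉ sep := by
    rw [hsep]
    by_cases h0 : k = 0
    · simp [h0]
    · rw [if_neg h0]
      intro h
      rw [List.mem_singleton] at h
      exact mem_Bb_fst hx (by rw [h])
  unfold zerosBefore
  rw [hW, List.append_assoc]
  rw [List.idxOf_append_of_notMem hxP, List.idxOf_append_of_mem hxF]
  rw [List.take_length_add_append]
  rw [hFc, List.idxOf_append_of_notMem hxSep, List.append_assoc, List.take_length_add_append]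
  rw [List.take_append_of_le_length List.idxOf_le_length]
  rw [List.filter_append, List.filter_append, List.length_append, List.length_append]
  have h1 := zlen_pre a σ hn k
  have h3 : ∀ t, (((Bb a σ hn k).take t).filter
      fun z => decide (z.1 = 0)).length = 0 := by
    intro t
    have hsub := (List.take_sublist t (Bb a σ hn k)).filter
      (fun z => decide (z.1 = 0))
    rw [zf_Bb] at hsub
    rw [List.sublist_nil.1 hsub]
    rfl
  rw [h1, h3]
  by_cases h0 : k = 0
  · subst h0
    rw [hsep]
    simp
  · rw [hsep, if_neg h0]
    simp only [List.filter_cons, List.filter_nil]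
    rw [if_pos (by simp)]
    simp only [List.length_cons, List.length_nil]
    omega

lemma block_ww (a σ : ColoredPerm r n) (hn : 0 < n) {k : ℕ} (hk : k < r) :
    block (ww r a σ hn) k = Bb a σ hn k := by
  have hcalc : block (ww r a σ hn) k
      = (List.range r).flatMap (fun l => (Fc a σ hn l).filter
          fun x => decide (1 ≤ x.1 ∧ zerosBefore (ww r a σ hn) x = k)) := by
    rw [← filter_flatMap']
    rfl
  have hFl : ∀ l < r, (Fc a σ hn l).filter
      (fun x => decide (1 ≤ x.1 ∧ zerosBefore (ww r a σ hn) x = k))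
      = if l = k then Bb a σ hn k else [] := by
    intro l hl
    unfold Fc
    rw [List.filter_append]
    have hsep : ((if l = 0 then ([] : List (ℕ × ℕ)) else [((0 : ℕ), l)]).filter
        fun x => decide (1 ≤ x.1 ∧ zerosBefore (ww r a σ hn) x = k)) = [] := by
      by_cases h0 : l = 0
      · rw [h0]; simp
      · rw [if_neg h0]
        simp
    rw [hsep, List.nil_append]
    by_cases hlk : l = k
    · subst hlk
      rw [if_pos rfl, List.filter_eq_self]
      intro x hx
      have h1 : 1 ≤ x.1 := Nat.one_le_iff_ne_zero.2 (mem_Bb_fst hx)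
      have h2 := zb_Bb a σ hn hl hx
      simp [h1, h2]
    · rw [if_neg hlk, List.filter_eq_nil_iff]
      intro x hx
      have h2 := zb_Bb a σ hn hl hx
      simp [h2, hlk]
  rw [hcalc]
  rw [flatMap_eq_single _ r k hk (fun l hl hlk => by rw [hFl l hl, if_neg hlk]),
    hFl k hk, if_pos rfl]

lemma blockWord_ww [NeZero r] (a σ : ColoredPerm r n) (hn : 0 < n) {k : ℕ} (hk : k < r) :
    blockWord r (ww r a σ hn) k = Lb a σ hn k := by
  unfold blockWord
  rw [block_ww a σ hn hk]
  unfold Bb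
  rw [List.map_map]
  refine (List.map_congr_left ?_).trans (List.map_id _)
  intro x hxL
  obtain ⟨j, rfl⟩ := mem_word.1 (List.mem_filter.1 hxL).1
  exact shiftLetter_shiftUp hk (show (letterOf σ j).2 < r from ZMod.val_lt _)

end Blocks

section Forward

variable {r n : ℕ}

lemma indexOf_get_nodup {α : Type*} [DecidableEq α] {l : List α} (h : l.Nodup)
    (i : Fin l.length) : l.idxOf (l.get i) = i := by
  have h1 : l.get ⟨l.idxOf (l.get i),
      List.idxOf_lt_length_iff.2 (List.get_mem l i)⟩ = l.get i := List.idxOf_get _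
  exact congrArg Fin.val ((List.Nodup.get_inj_iff h).1 h1)

lemma nodup_pairwise_indexOf {α : Type*} [DecidableEq α] {l : List α} (h : l.Nodup) :
    l.Pairwise (fun x y => l.idxOf x < l.idxOf y) := by
  rw [List.pairwise_iff_get]
  intro i j hij
  rw [indexOf_get_nodup h, indexOf_get_nodup h]
  exact hij

/-- Total number of zero symbols in a word listing `permElems`. -/
lemma zcount {a : ColoredPerm r n} {w : List (ℕ × ℕ)} (hN : w.Nodup)
    (hmem : ∀ x, x ∈ w ↔ x ∈ permElems r n a) :
    (w.filter fun z => decide (z.1 = 0)).length = r - 1 := by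
  set l := w.filter fun z => decide (z.1 = 0) with hl
  have hnd : l.Nodup := hN.filter _
  have hmem' : ∀ x, x ∈ l ↔ x ∈ (Finset.Ico 1 r).image (fun m => ((0 : ℕ), m)) := by
    intro x
    rw [hl, List.mem_filter, decide_eq_true_eq, hmem x, mem_permElems, Finset.mem_image]
    constructor
    · rintro ⟨⟨i, rfl⟩ | ⟨m, h1, h2, rfl⟩, h0⟩
      · exact absurd h0 (by simp [letterOf])
      · exact ⟨m, Finset.mem_Ico.2 ⟨h1, h2⟩, rfl⟩
    · rintro ⟨m, hm, rfl⟩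
      rw [Finset.mem_Ico] at hm
      exact ⟨Or.inr ⟨m, hm.1, hm.2, rfl⟩, rfl⟩
  have hfin : l.toFinset = (Finset.Ico 1 r).image (fun m => ((0 : ℕ), m)) := by
    ext x
    rw [List.mem_toFinset]
    exact hmem' x
  have := List.toFinset_card_of_nodup hnd
  rw [hfin] at this
  rw [← this, Finset.card_image_of_injective _ (fun u v huv => by
    simpa using congrArg Prod.snd huv), Nat.card_Ico]

lemma zb_le {w : List (ℕ × ℕ)} (x : ℕ × ℕ) :
    zerosBefore w x ≤ (w.filter fun z => decide (z.1 = 0)).length := by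
  unfold zerosBefore
  exact ((List.take_sublist _ _).filter _).length_le

lemma zb_mono {w : List (ℕ × ℕ)} {x y : ℕ × ℕ}
    (h : w.idxOf x ≤ w.idxOf y) : zerosBefore w x ≤ zerosBefore w y := by
  unfold zerosBefore
  exact ((take_sublist_take h).filter _).length_le

/-- Fact A: the number of zeros before the letter `π(i)` in `w` equals the color
of `(σ⁻¹π)` at `i`. -/
lemma factA [NeZero r] (a σ : ColoredPerm r n) (hn : 0 < n) {w : List (ℕ × ℕ)}
    (hN : w.Nodup) (hmem : ∀ x, x ∈ w ↔ x ∈ permElems r n a)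
    (hsub : ∀ i < r, (blockWord r w i).Sublist (word σ)) (i : Fin n) :
    zerosBefore w (letterOf a i) = ((σ⁻¹ * a).col i).val := by
  set c := zerosBefore w (letterOf a i) with hc
  have hr0 : 0 < r := Nat.pos_of_ne_zero (NeZero.ne r)
  have hcr : c < r := by
    have h1 := zb_le (w := w) (letterOf a i)
    rw [zcount hN hmem] at h1
    omega
  have hmemw : letterOf a i ∈ w := (hmem _).2 (mem_permElems.2 (Or.inl ⟨i, rfl⟩))
  have hblk : letterOf a i ∈ block w c := by
    refine List.mem_filter.2 ⟨hmemw, ?_⟩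
    rw [decide_eq_true_eq]
    exact ⟨by simp [letterOf], rfl⟩
  have hbw : shiftLetter r c (letterOf a i) ∈ blockWord r w c :=
    List.mem_map_of_mem hblk
  have hmem2 : shiftLetter r c (letterOf a i) ∈ word σ := (hsub c hcr).mem hbw
  obtain ⟨j, hj⟩ := mem_word.1 hmem2
  have hfst : σ.perm j = a.perm i := by
    have := congrArg Prod.fst hj
    simp only [letterOf, shiftLetter] at this
    exact Fin.ext (by omega)
  have hjτ : j = (σ⁻¹ * a).perm i := by
    rw [tau_perm, ← hfst]
    simp
  -- numeric color computation
  set A := (a.col i).val with hA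
  set S := (σ.col j).val with hS
  set C := ((σ⁻¹ * a).col i).val with hC
  have hAr : A < r := ZMod.val_lt _
  have hCr : C < r := ZMod.val_lt _
  have h5 : (S + C) % r = A := by
    have := congrArg Prod.snd (shift_id' a σ hn i)
    rw [← hjτ] at this
    simpa [shiftUp, letterOf] using this
  have h6 : S = (A + r - c % r) % r := by
    have := congrArg Prod.snd hj
    simpa [shiftLetter, letterOf] using this
  rw [Nat.mod_eq_of_lt hcr] at h6
  rw [h6, Nat.mod_add_mod] at h5
  have hX : (A + (r - c + C)) % r = A := by
    rw [show A + (r - c + C) = A + r - c + C by omega]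
    exact h5
  set X := r - c + C with hXdef
  have h8 : (A % r + X % r) % r = A := by
    rw [← Nat.add_mod]
    exact hX
  rw [Nat.mod_eq_of_lt hAr] at h8
  have h9 : X % r < r := Nat.mod_lt _ hr0
  have h7 : X % r = 0 := by
    rcases Nat.lt_or_ge (A + X % r) r with hlt | hge
    · rw [Nat.mod_eq_of_lt hlt] at h8
      omega
    · have h10 : (A + X % r) % r = A + X % r - r := by
        rw [Nat.mod_eq_sub_mod hge, Nat.mod_eq_of_lt (by omega)]
      omega
  have hdvd : r ∣ X := Nat.dvd_of_mod_eq_zero h7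
  have hle : r ≤ X := Nat.le_of_dvd (by omega) hdvd
  have hdvd2 : r ∣ X - r := Nat.dvd_sub hdvd dvd_rfl
  have h12 : X - r = 0 := Nat.eq_zero_of_dvd_of_lt hdvd2 (by omega)
  omega

end Forward

section Forward2

variable {r n : ℕ}

lemma factB [NeZero r] (a σ : ColoredPerm r n) (hn : 0 < n) {w : List (ℕ × ℕ)}
    (hN : w.Nodup)
    (hsub : ∀ i < r, (blockWord r w i).Sublist (word σ)) {c : ℕ} (hcr : c < r)
    {p p' : Fin n} (hp : letterOf a p ∈ block w c) (hp' : letterOf a p' ∈ block w c)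
    (hidx : @List.idxOf _ instBEqOfDecidableEq (letterOf a p) w
      < @List.idxOf _ instBEqOfDecidableEq (letterOf a p') w) :
    (((σ⁻¹ * a).perm p : ℕ)) < ((σ⁻¹ * a).perm p' : ℕ) := by
  have hPw := nodup_pairwise_indexOf hN
  have hPblk : (block w c).Pairwise
      (fun x y => @List.idxOf _ instBEqOfDecidableEq x w
        < @List.idxOf _ instBEqOfDecidableEq y w) := by
    unfold block
    exact hPw.filter _
  have hRpos : (blockWord r w c).Pairwise (fun x y => posv σ hn x < posv σ hn y) :=
    List.Pairwise.sublist (hsub c hcr) (pairwise_word σ hn)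
  have hRblk : (block w c).Pairwise
      (fun x y => posv σ hn (shiftLetter r c x) < posv σ hn (shiftLetter r c y)) := by
    unfold blockWord at hRpos
    rw [List.pairwise_map] at hRpos
    exact hRpos
  have hcomb := hPblk.and hRblk
  rcases pairwise_cases hcomb hp hp' with heq | hT | hT
  · rw [heq] at hidx
    exact absurd hidx (lt_irrefl _)
  · have h2 : posv σ hn (letterOf a p) < posv σ hn (letterOf a p') := hT.2
    rwa [posv_letter_a, posv_letter_a] at h2
  · exact absurd hT.1 (by omega)

lemma rtg_key [NeZero r] (a σ : ColoredPerm r n) (hn : 0 < n) (I : Finset (Fin n))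
    (hDes : ColoredPerm.Des (σ⁻¹ * a) ⊆ I) {x y : ℕ × ℕ}
    (h : Relation.ReflTransGen (chainBase r n a I) x y) :
    partLE (key a σ hn x) (key a σ hn y) := by
  induction h with
  | refl => exact partLE_refl _
  | tail _ hbc ih => exact partLE_trans ih (chainBase_key a σ hn I hDes hbc)

end Forward2

end Aux

open ColoredPerm in
/-- For the colored chain poset `C(I, π)`: a colored permutation `σ` is a colored
linear extension of `C(I, π)` if and only if `Des(σ⁻¹π) ⊆ I`. -/
theorem chain_colored_linear_extensions (r n : ℕ) [NeZero r] (hn : 1 ≤ n)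
    (a : ColoredPerm r n) (I : Finset (Fin n)) (Q : ColoredPoset r)
    (helems : Q.elems = permElems r n a)
    (hrel : ∀ x y, Q.rel x y ↔ Relation.ReflTransGen (chainBase r n a I) x y)
    (σ : ColoredPerm r n) :
    (∃ w, IsLinExt Q w ∧ IsColoredLinExt r w (word σ)) ↔ Des (σ⁻¹ * a) ⊆ I := by
  have hn0 : 0 < n := hn
  constructor
  · rintro ⟨w, ⟨hN, hmem, hord⟩, hcl⟩
    have hmem' : ∀ x, x ∈ w ↔ x ∈ permElems r n a := by
      intro x; rw [hmem x, helems]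
    have hord' : ∀ x ∈ permElems r n a, ∀ y ∈ permElems r n a,
        Relation.ReflTransGen (chainBase r n a I) x y → x ≠ y
        → w.idxOf x < w.idxOf y := by
      intro x hx y hy hxy hne
      exact hord x (by rw [helems]; exact hx) y (by rw [helems]; exact hy)
        ((hrel x y).2 hxy) hne
    intro p hpDes
    by_contra hpI
    rw [mem_Des_iff, letterAt_coe] at hpDes
    have hxmem : letterOf a p ∈ permElems r n a := mem_permElems.2 (Or.inl ⟨p, rfl⟩)
    have hApv := factA a σ hn0 hN hmem' hcl.2 p
    by_cases hp1 : p.1 + 1 < n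
    · set p' : Fin n := ⟨p.1 + 1, hp1⟩ with hp'def
      have hymem : letterOf a p' ∈ permElems r n a := mem_permElems.2 (Or.inl ⟨p', rfl⟩)
      have hstep : chainBase r n a I (letterOf a p) (letterOf a p') :=
        Or.inr ⟨p, hpI, rfl, by unfold nextLetter; rw [dif_pos hp1]⟩
      have hne : letterOf a p ≠ letterOf a p' := by
        intro hc
        have h1 := congrArg Prod.fst hc
        simp only [letterOf] at h1
        have h2 : a.perm p = a.perm p' := Fin.ext (by omega)
        have h3 := congrArg Fin.val (a.perm.injective h2)
        rw [hp'def] at h3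
        simp at h3
      have hidx := hord' _ hxmem _ hymem (Relation.ReflTransGen.single hstep) hne
      have hA' := factA a σ hn0 hN hmem' hcl.2 p'
      have hmono : ((σ⁻¹ * a).col p).val ≤ ((σ⁻¹ * a).col p').val := by
        rw [← hApv, ← hA']
        exact zb_mono (le_of_lt hidx)
      have hAt : ColoredPerm.letterAt (σ⁻¹ * a) (p.1 + 1)
          = (((σ⁻¹ * a).perm p' : ℕ) + 1, ((σ⁻¹ * a).col p').val) := by
        have h4 := letterAt_coe (σ⁻¹ * a) p'
        rw [hp'def] at h4
        exact h4
      rw [hAt] at hpDes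
      unfold letterLT at hpDes
      rcases hpDes with h | ⟨heq, hlt⟩
      · simp only at h
        omega
      · simp only at heq hlt
        have hcr : ((σ⁻¹ * a).col p).val < r := ZMod.val_lt _
        have hblkp : letterOf a p ∈ block w (((σ⁻¹ * a).col p).val) := by
          refine List.mem_filter.2 ⟨(hmem' _).2 hxmem, ?_⟩
          rw [decide_eq_true_eq]
          exact ⟨by simp [letterOf], hApv⟩
        have hblkp' : letterOf a p' ∈ block w (((σ⁻¹ * a).col p).val) := by
          refine List.mem_filter.2 ⟨(hmem' _).2 hymem, ?_⟩
          rw [decide_eq_true_eq]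
          exact ⟨by simp [letterOf], by rw [hA', heq]⟩
        have hidx' : @List.idxOf _ instBEqOfDecidableEq (letterOf a p) w
            < @List.idxOf _ instBEqOfDecidableEq (letterOf a p') w := by
          rw [← idxP, ← idxP]
          exact hidx
        have hfb := factB a σ hn0 hN hcl.2 hcr hblkp hblkp' hidx'
        omega
    · have hAt : ColoredPerm.letterAt (σ⁻¹ * a) (p.1 + 1) = ((0 : ℕ), 1) := by
        unfold ColoredPerm.letterAt
        rw [dif_neg hp1]
      rw [hAt] at hpDes
      unfold letterLT at hpDes
      simp only at hpDes
      have hvr : ((σ⁻¹ * a).col p).val < r := ZMod.val_lt _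
      rcases Nat.lt_or_ge r 2 with hr1 | hr2
      · omega
      · have h01 : ((0 : ℕ), 1) ∈ permElems r n a :=
          mem_permElems.2 (Or.inr ⟨1, le_refl 1, hr2, rfl⟩)
        have hstep : chainBase r n a I (letterOf a p) ((0 : ℕ), 1) :=
          Or.inr ⟨p, hpI, rfl, by unfold nextLetter; rw [dif_neg hp1]⟩
        have hne : letterOf a p ≠ ((0 : ℕ), 1) := by
          intro hc
          have h1 := congrArg Prod.fst hc
          simp [letterOf] at h1
        have hidx0 := hord' _ hxmem _ h01 (Relation.ReflTransGen.single hstep) hne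
        have hzb : zerosBefore w (letterOf a p) = 0 := by
          unfold zerosBefore
          rw [List.length_eq_zero_iff, List.filter_eq_nil_iff]
          intro z hz hz0
          rw [decide_eq_true_eq] at hz0
          have hzw : z ∈ w := (List.take_sublist _ _).subset hz
          have hzidx : w.idxOf z < w.idxOf (letterOf a p) := by
            have h1 := mem_take_indexOf hz
            rw [← idxP] at h1
            exact h1
          obtain ⟨m, hm1, hm2, hzm⟩ : ∃ m, 1 ≤ m ∧ m < r ∧ z = ((0 : ℕ), m) := by
            rcases mem_permElems.1 ((hmem' z).1 hzw) with ⟨i, hi⟩ | hm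
            · exact absurd hz0 (by rw [← hi]; simp [letterOf])
            · exact hm
          by_cases hm1' : m = 1
          · rw [hzm, hm1'] at hzidx
            omega
          · have hstep2 : chainBase r n a I ((0 : ℕ), 1) ((0 : ℕ), m) :=
              Or.inl ⟨1, m, le_refl 1, by omega, hm2, rfl, rfl⟩
            have hne2 : ((0 : ℕ), 1) ≠ ((0 : ℕ), m) := by
              intro hc
              have h5 : (1 : ℕ) = m := congrArg Prod.snd hc
              exact hm1' h5.symm
            have hidx2 := hord' _ h01 _ (mem_permElems.2 (Or.inr ⟨m, hm1, hm2, rfl⟩))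
              (Relation.ReflTransGen.single hstep2) hne2
            rw [hzm] at hzidx
            omega
        rw [hApv] at hzb
        omega
  · intro hDes
    refine ⟨ww r a σ hn0, ⟨nodup_ww a σ hn0, ?_, ?_⟩, ?_, ?_⟩
    · intro x
      rw [helems]
      exact mem_ww
    · intro x hx y hy hxy hne
      rw [helems] at hx hy
      have hle : partLE (key a σ hn0 x) (key a σ hn0 y) :=
        rtg_key a σ hn0 I hDes ((hrel x y).1 hxy)
      rw [idxP, idxP]
      exact indexOf_lt_of_pairwise' (pairwise_ww a σ hn0) (mem_ww.2 hx) (mem_ww.2 hy)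
        hne (fun h => not_partLT_of_partLE hle h)
    · have hsum := sum_filter_multiset (blkv a σ hn0) r (word σ)
        (fun x _ => ZMod.val_lt _)
      rw [Finset.sum_congr rfl
        (fun i hi => by rw [blockWord_ww a σ hn0 (Finset.mem_range.1 hi)])]
      exact hsum.symm
    · intro i hir
      rw [blockWord_ww a σ hn0 hir]
      exact List.filter_sublist
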